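/- arXiv:2209.14720 — 2 statements merged into one kernel-verified Lean document; each statement's English description precedes it below -/
import Mathlib

section
/- Let m ≥ 4 be an integer and let Ω₂ ⊂ ℝ² be the triangle with vertices (0,0), (m,m−3), (m−3/2,m−3/2), with density P_m(x,y) = 4·x^{2m−7}·y^{2m−7}·(x+y)²·(x−y)². Then (∫_{Ω₂} (x+y)·P_m(x,y) dxdy)/(∫_{Ω₂} P_m(x,y) dxdy) = (2m−3)(4m−8)/(4m−7), and this quantity is strictly greater than 2m−4. -/
open MeasureTheory Set

private lemma hasFDerivAt_myPhi (c : ℝ) (p : ℝ × ℝ) :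
    HasFDerivAt (fun q : ℝ × ℝ => (q.1 * q.2, q.1 * (c - q.2)))
      (LinearMap.toContinuousLinearMap (Matrix.toLin (Module.Basis.finTwoProd ℝ) (Module.Basis.finTwoProd ℝ)
        !![p.2, p.1; c - p.2, -p.1])) p := by
  rw [Matrix.toLin_finTwoProd_toContinuousLinearMap]
  refine HasFDerivAt.congr_fderiv (HasFDerivAt.prodMk (𝕜 := ℝ)
    ((@hasFDerivAt_fst ℝ _ ℝ _ _ ℝ _ _ p).fun_mul (@hasFDerivAt_snd ℝ _ ℝ _ _ ℝ _ _ p))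
    ((@hasFDerivAt_fst ℝ _ ℝ _ _ ℝ _ _ p).fun_mul ((hasFDerivAt_const c p).fun_sub (@hasFDerivAt_snd ℝ _ ℝ _ _ ℝ _ _ p)))) ?_
  · apply ContinuousLinearMap.ext
    rintro ⟨v₁, v₂⟩
    simp [Prod.ext_iff]
    constructor <;> ring

private lemma key (a : ℕ) (c b : ℝ) (hc : 0 < c) (h2 : c / 2 < b) (h3 : b < c) :
    (∫ p in convexHull ℝ {((0:ℝ), (0:ℝ)), (b, c - b), (c / 2, c / 2)},
        (p.1 + p.2) * (4 * p.1 ^ a * p.2 ^ a * (p.1 + p.2) ^ 2 * (p.1 - p.2) ^ 2)) /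
      (∫ p in convexHull ℝ {((0:ℝ), (0:ℝ)), (b, c - b), (c / 2, c / 2)},
        4 * p.1 ^ a * p.2 ^ a * (p.1 + p.2) ^ 2 * (p.1 - p.2) ^ 2) =
      c * (2 * a + 6) / (2 * a + 7) := by
  have hb2 : (0:ℝ) < b - c / 2 := by linarith
  set Φ : ℝ × ℝ → ℝ × ℝ := fun q => (q.1 * q.2, q.1 * (c - q.2)) with hΦ
  set S : Set (ℝ × ℝ) := Ioc (0:ℝ) 1 ×ˢ Icc (c / 2) b with hSdef
  -- the convex hull equals the image of the closed rectangle
  have hull_img : convexHull ℝ ({((0:ℝ), (0:ℝ)), (b, c - b), (c / 2, c / 2)} : Set (ℝ × ℝ))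
      = Φ '' (Icc (0:ℝ) 1 ×ˢ Icc (c / 2) b) := by
    rw [convexHull_insert (insert_nonempty _ _), convexHull_pair]
    ext p
    rw [mem_convexJoin]
    constructor
    · rintro ⟨x0, hx0, z, hz, hp⟩
      rw [mem_singleton_iff] at hx0
      subst hx0
      obtain ⟨u, v, hu, hv, huv, rfl⟩ := hz
      obtain ⟨u', v', hu', hv', huv', rfl⟩ := hp
      have hv1 : v = 1 - u := by linarith
      subst hv1
      refine ⟨(v', u * b + (1 - u) * (c / 2)), ⟨⟨hv', by linarith⟩, ⟨by nlinarith, by nlinarith⟩⟩, ?_⟩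
      simp only [hΦ, Prod.smul_mk, Prod.mk_add_mk, Prod.mk.injEq, smul_eq_mul]
      constructor <;> ring
    · rintro ⟨⟨s, t⟩, ⟨hs, ht⟩, rfl⟩
      refine ⟨((0:ℝ), (0:ℝ)), mem_singleton _, (t, c - t),
        ⟨(t - c / 2) / (b - c / 2), (b - t) / (b - c / 2),
          div_nonneg (by linarith [ht.1]) hb2.le, div_nonneg (by linarith [ht.2]) hb2.le,
          by rw [← add_div, div_eq_one_iff_eq hb2.ne']; ring, ?_⟩,
          1 - s, s, by linarith [hs.2], hs.1, by ring, ?_⟩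
      · simp only [Prod.smul_mk, Prod.mk_add_mk, Prod.mk.injEq, smul_eq_mul]
        constructor
        · rw [div_mul_eq_mul_div, div_mul_eq_mul_div, ← add_div, div_eq_iff hb2.ne']
          ring
        · rw [div_mul_eq_mul_div, div_mul_eq_mul_div, ← add_div, div_eq_iff hb2.ne']
          ring
      · simp only [hΦ, Prod.smul_mk, Prod.mk_add_mk, Prod.mk.injEq, smul_eq_mul]
        constructor <;> ring
  -- the hull is a.e. equal to the image of the half-open rectangle
  have hae : (convexHull ℝ ({((0:ℝ), (0:ℝ)), (b, c - b), (c / 2, c / 2)} : Set (ℝ × ℝ)))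
      =ᵐ[volume] Φ '' S := by
    rw [hull_img]
    refine MeasureTheory.ae_eq_set.2 ⟨measure_mono_null ?_ (measure_singleton ((0:ℝ), (0:ℝ))), ?_⟩
    · rintro p ⟨⟨⟨s, t⟩, ⟨hs, ht⟩, rfl⟩, hp⟩
      rcases eq_or_lt_of_le hs.1 with h | h
      · have h0 : s = 0 := h.symm
        simp [hΦ, Prod.ext_iff, h0]
      · exact absurd ⟨(s, t), ⟨⟨h, hs.2⟩, ht⟩, rfl⟩ hp
    · have : Φ '' S ⊆ Φ '' (Icc (0:ℝ) 1 ×ˢ Icc (c / 2) b) :=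
        image_mono (prod_mono Ioc_subset_Icc_self subset_rfl)
      rw [diff_eq_empty.2 this, measure_empty]
  -- change of variables setup
  have hS : MeasurableSet S := measurableSet_Ioc.prod measurableSet_Icc
  set B : ℝ × ℝ → (ℝ × ℝ) →L[ℝ] (ℝ × ℝ) := fun p =>
    LinearMap.toContinuousLinearMap (Matrix.toLin (Module.Basis.finTwoProd ℝ) (Module.Basis.finTwoProd ℝ)
      !![p.2, p.1; c - p.2, -p.1]) with hB
  have hfd : ∀ p ∈ S, HasFDerivWithinAt Φ (B p) S p := fun p _ =>
    (hasFDerivAt_myPhi c p).hasFDerivWithinAt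
  have hdet : ∀ p : ℝ × ℝ, (B p).det = -(p.1 * c) := by
    intro p
    simp only [hB, LinearMap.det_toContinuousLinearMap, LinearMap.det_toLin,
      Matrix.det_fin_two_of]
    ring
  have hinj : InjOn Φ S := by
    rintro ⟨s, t⟩ ⟨hs, ht⟩ ⟨s', t'⟩ ⟨hs', ht'⟩ h
    simp only [hΦ, Prod.mk.injEq] at h
    obtain ⟨h1, h4⟩ := h
    have e1 : s * c = s' * c := by linarith
    have e2 : s = s' := mul_right_cancel₀ hc.ne' e1
    subst e2
    have e3 : t = t' := mul_left_cancel₀ (ne_of_gt hs.1) h1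
    simp [e3]
  set F : ℝ → ℝ := fun t => 4 * t ^ a * (c - t) ^ a * c ^ 2 * (2 * t - c) ^ 2 with hF
  set J : ℝ := ∫ t in Icc (c / 2) b, F t with hJ
  have hJpos : 0 < J := by
    rw [hJ, integral_Icc_eq_integral_Ioc, ← intervalIntegral.integral_of_le h2.le]
    apply intervalIntegral.intervalIntegral_pos_of_pos_on
    · exact Continuous.intervalIntegrable (by fun_prop) _ _
    · intro t ht
      have h1 : 0 < t := lt_trans (by linarith) ht.1
      have h2' : 0 < c - t := by linarith [ht.2]
      have h3' : 0 < 2 * t - c := by linarith [ht.1]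
      positivity
    · exact h2
  -- auxiliary integral of powers of s
  have hpow : ∀ k : ℕ, (∫ s in Ioc (0:ℝ) 1, s ^ k) = 1 / (k + 1) := by
    intro k
    rw [← intervalIntegral.integral_of_le zero_le_one, integral_pow]
    norm_num
  -- compute the two integrals
  have main : ∀ (k : ℕ) (g : ℝ × ℝ → ℝ), (∀ p ∈ S, |(B p).det| • g (Φ p) = p.1 ^ k * F p.2) →
      (∫ p in Φ '' S, g p) = (1 / (k + 1)) * J := by
    intro k g hg
    rw [integral_image_eq_integral_abs_det_fderiv_smul volume hS hfd hinj g,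
      setIntegral_congr_fun hS hg, hSdef, Measure.volume_eq_prod, ← Measure.prod_restrict,
      MeasureTheory.integral_prod_mul (f := fun s : ℝ => s ^ k) (g := F), hpow k, hJ]
  have hden : (∫ p in convexHull ℝ ({((0:ℝ), (0:ℝ)), (b, c - b), (c / 2, c / 2)} : Set (ℝ × ℝ)),
      4 * p.1 ^ a * p.2 ^ a * (p.1 + p.2) ^ 2 * (p.1 - p.2) ^ 2)
      = c * ((1 / (2 * a + 5 + 1)) * J) := by
    rw [setIntegral_congr_set hae]
    rw [show (∫ p in Φ '' S, 4 * p.1 ^ a * p.2 ^ a * (p.1 + p.2) ^ 2 * (p.1 - p.2) ^ 2)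
        = ∫ p in Φ '' S, c * (c⁻¹ * (4 * p.1 ^ a * p.2 ^ a * (p.1 + p.2) ^ 2 * (p.1 - p.2) ^ 2))
        from by congr 1; ext p; field_simp]
    rw [integral_const_mul, main (2 * a + 5)
      (fun p => c⁻¹ * (4 * p.1 ^ a * p.2 ^ a * (p.1 + p.2) ^ 2 * (p.1 - p.2) ^ 2)) ?_]
    · push_cast
      ring
    · rintro ⟨s, t⟩ ⟨hs, ht⟩
      rw [hdet, abs_of_nonpos (by nlinarith [hs.1])]
      simp only [hΦ, hF, smul_eq_mul, mul_pow]
      field_simp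
      ring
  have hnum : (∫ p in convexHull ℝ ({((0:ℝ), (0:ℝ)), (b, c - b), (c / 2, c / 2)} : Set (ℝ × ℝ)),
      (p.1 + p.2) * (4 * p.1 ^ a * p.2 ^ a * (p.1 + p.2) ^ 2 * (p.1 - p.2) ^ 2))
      = c ^ 2 * ((1 / (2 * a + 6 + 1)) * J) := by
    rw [setIntegral_congr_set hae]
    rw [show (∫ p in Φ '' S, (p.1 + p.2) * (4 * p.1 ^ a * p.2 ^ a * (p.1 + p.2) ^ 2 * (p.1 - p.2) ^ 2))
        = ∫ p in Φ '' S, c ^ 2 * ((c ^ 2)⁻¹ * ((p.1 + p.2) * (4 * p.1 ^ a * p.2 ^ a * (p.1 + p.2) ^ 2 * (p.1 - p.2) ^ 2)))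
        from by congr 1; ext p; field_simp]
    rw [integral_const_mul, main (2 * a + 6)
      (fun p => (c ^ 2)⁻¹ * ((p.1 + p.2) * (4 * p.1 ^ a * p.2 ^ a * (p.1 + p.2) ^ 2 * (p.1 - p.2) ^ 2))) ?_]
    · push_cast
      ring
    · rintro ⟨s, t⟩ ⟨hs, ht⟩
      rw [hdet, abs_of_nonpos (by nlinarith [hs.1])]
      simp only [hΦ, hF, smul_eq_mul, mul_pow]
      field_simp
      ring
  rw [hnum, hden]
  rw [div_eq_div_iff (by positivity) (by positivity)]
  field_simp
  ring

/-- The sum of the barycenter coordinates of the triangle `Ω₂` with vertices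
`(0,0)`, `(m,m−3)`, `(m−3/2,m−3/2)`, with respect to the Duistermaat–Heckman density
`P_m(x,y) = 4x^{2m−7}y^{2m−7}(x+y)²(x−y)²`, equals `(2m−3)(4m−8)/(4m−7)`, and is `> 2m−4`. -/
theorem barycenter_Omega2_AIII_two_m (m : ℕ) (hm : 4 ≤ m) :
    let Ω : Set (ℝ × ℝ) := convexHull ℝ
      {((0 : ℝ), (0 : ℝ)), ((m : ℝ), (m : ℝ) - 3), ((m : ℝ) - 3 / 2, (m : ℝ) - 3 / 2)}
    let P : ℝ × ℝ → ℝ := fun p =>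
      4 * p.1 ^ (2 * m - 7) * p.2 ^ (2 * m - 7) * (p.1 + p.2) ^ 2 * (p.1 - p.2) ^ 2
    (∫ p in Ω, (p.1 + p.2) * P p) / (∫ p in Ω, P p) =
        (2 * (m : ℝ) - 3) * (4 * (m : ℝ) - 8) / (4 * (m : ℝ) - 7) ∧
      2 * (m : ℝ) - 4 < (2 * (m : ℝ) - 3) * (4 * (m : ℝ) - 8) / (4 * (m : ℝ) - 7) := by
  intro Ω P
  have hm4 : (4:ℝ) ≤ (m:ℝ) := by exact_mod_cast hm
  constructor
  · have h := key (2 * m - 7) (2 * (m:ℝ) - 3) (m:ℝ) (by linarith) (by linarith) (by linarith)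
    rw [show 2 * (m:ℝ) - 3 - (m:ℝ) = (m:ℝ) - 3 from by ring,
      show (2 * (m:ℝ) - 3) / 2 = (m:ℝ) - 3 / 2 from by ring] at h
    have hc : ((2 * m - 7 : ℕ) : ℝ) = 2 * (m:ℝ) - 7 := by
      push_cast [Nat.cast_sub (by omega : 7 ≤ 2 * m)]; ring
    rw [hc] at h
    simp only [Ω, P]
    rw [h]
    rw [show 2 * (2 * (m:ℝ) - 7) + 6 = 4 * (m:ℝ) - 8 from by ring,
      show 2 * (2 * (m:ℝ) - 7) + 7 = 4 * (m:ℝ) - 7 from by ring]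
  · have h7 : 0 < 4 * (m:ℝ) - 7 := by linarith
    rw [lt_div_iff₀ h7]
    nlinarith
end

section
/- Let Δ₅^{Bℓ} ⊂ ℝ² be the convex hull of (0,0), (5,0), (5,1), (4,3), (7/2,7/2) and let P₅(x,y) = 4·x³·y³·(x+y)²·(x−y)². Then ∫_{Δ₅^{Bℓ}} P₅(x,y) dxdy = 1553111579/2520. -/
open MeasureTheory

open Set in
/-- The halfplane description of the polytope. -/
def S5 : Set (ℝ × ℝ) :=
  {p : ℝ × ℝ | 0 ≤ p.2 ∧ p.1 ≤ 5 ∧ p.2 ≤ p.1 ∧ p.1 + p.2 ≤ 7 ∧ 2 * p.1 + p.2 ≤ 11}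

lemma mem_hull3 {V : Set (ℝ × ℝ)} {A B C : ℝ × ℝ} (hA : A ∈ V) (hB : B ∈ V) (hC : C ∈ V)
    {a b c : ℝ} (ha : 0 ≤ a) (hb : 0 ≤ b) (hc : 0 ≤ c) (h : a + b + c = 1) :
    a • A + b • B + c • C ∈ convexHull ℝ V := by
  have := (convex_convexHull ℝ V).sum_mem (t := (Finset.univ : Finset (Fin 3)))
    (w := ![a, b, c]) (z := ![A, B, C])
    (by intro i _; fin_cases i <;> simpa)
    (by simp [Fin.sum_univ_three, h])
    (by intro i _; fin_cases i <;>
        first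
          | exact subset_convexHull ℝ V hA
          | exact subset_convexHull ℝ V hB
          | exact subset_convexHull ℝ V hC)
  simpa [Fin.sum_univ_three] using this

lemma hull_eq :
    convexHull ℝ {((0 : ℝ), (0 : ℝ)), (5, 0), (5, 1), (4, 3), (7 / 2, 7 / 2)} = S5 := by
  apply le_antisymm
  · apply convexHull_min
    · intro p hp
      simp only [Set.mem_insert_iff, Set.mem_singleton_iff] at hp
      rcases hp with h | h | h | h | h <;> subst h <;>
        simp only [S5, Set.mem_setOf_eq] <;> norm_num
    · intro p hp q hq a b ha hb hab
      obtain ⟨h1, h2, h3, h4, h5⟩ := hp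
      obtain ⟨k1, k2, k3, k4, k5⟩ := hq
      refine ⟨?_, ?_, ?_, ?_, ?_⟩ <;>
        simp only [Prod.fst_add, Prod.snd_add, Prod.smul_fst, Prod.smul_snd, smul_eq_mul] <;>
        nlinarith [mul_nonneg ha h1, mul_nonneg hb k1, mul_le_mul_of_nonneg_left h2 ha,
          mul_le_mul_of_nonneg_left k2 hb, mul_le_mul_of_nonneg_left h3 ha,
          mul_le_mul_of_nonneg_left k3 hb, mul_le_mul_of_nonneg_left h4 ha,
          mul_le_mul_of_nonneg_left k4 hb, mul_le_mul_of_nonneg_left h5 ha,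
          mul_le_mul_of_nonneg_left k5 hb]
  · intro p hp
    obtain ⟨h1, h2, h3, h4, h5⟩ := hp
    have hA : ((0 : ℝ), (0 : ℝ)) ∈ ({((0 : ℝ), (0 : ℝ)), (5, 0), (5, 1), (4, 3), (7 / 2, 7 / 2)} : Set (ℝ × ℝ)) := by simp
    have hB : ((5 : ℝ), (0 : ℝ)) ∈ ({((0 : ℝ), (0 : ℝ)), (5, 0), (5, 1), (4, 3), (7 / 2, 7 / 2)} : Set (ℝ × ℝ)) := by simp
    have hC : ((5 : ℝ), (1 : ℝ)) ∈ ({((0 : ℝ), (0 : ℝ)), (5, 0), (5, 1), (4, 3), (7 / 2, 7 / 2)} : Set (ℝ × ℝ)) := by simp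
    have hD : ((4 : ℝ), (3 : ℝ)) ∈ ({((0 : ℝ), (0 : ℝ)), (5, 0), (5, 1), (4, 3), (7 / 2, 7 / 2)} : Set (ℝ × ℝ)) := by simp
    have hE : ((7 / 2 : ℝ), (7 / 2 : ℝ)) ∈ ({((0 : ℝ), (0 : ℝ)), (5, 0), (5, 1), (4, 3), (7 / 2, 7 / 2)} : Set (ℝ × ℝ)) := by simp
    rcases le_total (5 * p.2) p.1 with hc1 | hc1
    · -- triangle (0,0), (5,0), (5,1)
      have hpe : p = (1 - p.1 / 5) • ((0 : ℝ), (0 : ℝ)) + (p.1 / 5 - p.2) • ((5 : ℝ), (0 : ℝ))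
          + p.2 • ((5 : ℝ), (1 : ℝ)) := by
        refine Prod.ext_iff.mpr ⟨?_, ?_⟩ <;>
          simp only [Prod.smul_mk, smul_eq_mul, Prod.mk_add_mk, Prod.fst_add, Prod.snd_add] <;>
          ring
      rw [hpe]
      exact mem_hull3 hA hB hC (by linarith) (by linarith) h1 (by ring)
    · rcases le_total (4 * p.2) (3 * p.1) with hc2 | hc2
      · -- triangle (0,0), (5,1), (4,3)
        have hpe : p = (1 - (2 * p.1 + p.2) / 11) • ((0 : ℝ), (0 : ℝ))
            + ((3 * p.1 - 4 * p.2) / 11) • ((5 : ℝ), (1 : ℝ))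
            + ((5 * p.2 - p.1) / 11) • ((4 : ℝ), (3 : ℝ)) := by
          refine Prod.ext_iff.mpr ⟨?_, ?_⟩ <;>
            simp only [Prod.smul_mk, smul_eq_mul, Prod.mk_add_mk, Prod.fst_add, Prod.snd_add] <;>
            ring
        rw [hpe]
        exact mem_hull3 hA hC hD (by linarith) (by linarith) (by linarith) (by ring)
      · -- triangle (0,0), (4,3), (7/2,7/2)
        have hpe : p = (1 - (p.1 + p.2) / 7) • ((0 : ℝ), (0 : ℝ))
            + (p.1 - p.2) • ((4 : ℝ), (3 : ℝ))
            + ((8 * p.2 - 6 * p.1) / 7) • ((7 / 2 : ℝ), (7 / 2 : ℝ)) := by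
          refine Prod.ext_iff.mpr ⟨?_, ?_⟩ <;>
            simp only [Prod.smul_mk, smul_eq_mul, Prod.mk_add_mk, Prod.fst_add, Prod.snd_add] <;>
            ring
        rw [hpe]
        exact mem_hull3 hA hD hE (by linarith) (by linarith) (by linarith) (by ring)

open Set intervalIntegral in
/-- Inner integral in `y` from `0` to `u`. -/
lemma inner_int (x u : ℝ) (hu : 0 ≤ u) :
    (∫ y in Icc (0 : ℝ) u, 4 * x ^ 3 * y ^ 3 * (x + y) ^ 2 * (x - y) ^ 2)
      = x ^ 7 * u ^ 4 - 4 / 3 * x ^ 5 * u ^ 6 + 1 / 2 * x ^ 3 * u ^ 8 := by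
  rw [MeasureTheory.integral_Icc_eq_integral_Ioc, ← intervalIntegral.integral_of_le hu]
  have key : ∀ y ∈ Set.uIcc (0 : ℝ) u,
      HasDerivAt (fun y : ℝ => x ^ 7 * y ^ 4 - 4 / 3 * x ^ 5 * y ^ 6 + 1 / 2 * x ^ 3 * y ^ 8)
        (4 * x ^ 3 * y ^ 3 * (x + y) ^ 2 * (x - y) ^ 2) y := by
    intro y _
    have h := (((hasDerivAt_pow 4 y).const_mul (x ^ 7)).sub
        ((hasDerivAt_pow 6 y).const_mul (4 / 3 * x ^ 5))).add
        ((hasDerivAt_pow 8 y).const_mul (1 / 2 * x ^ 3))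
    refine h.congr_deriv ?_
    push_cast
    ring
  rw [intervalIntegral.integral_eq_sub_of_hasDerivAt key
    ((Continuous.intervalIntegrable (by fun_prop) _ _))]
  ring

open Set intervalIntegral in
lemma val1 : (∫ x in (0 : ℝ)..(7 / 2 : ℝ),
    (x ^ 7 * x ^ 4 - 4 / 3 * x ^ 5 * x ^ 6 + 1 / 2 * x ^ 3 * x ^ 8))
      = 13841287201 / 294912 := by
  have key : ∀ x ∈ Set.uIcc (0 : ℝ) (7 / 2 : ℝ),
      HasDerivAt (fun x : ℝ => (1/72 : ℝ) * x ^ 12)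
        (x ^ 7 * x ^ 4 - 4 / 3 * x ^ 5 * x ^ 6 + 1 / 2 * x ^ 3 * x ^ 8) x := by
    intro x _
    have h := ((hasDerivAt_pow 12 x).const_mul (1/72 : ℝ))
    refine h.congr_deriv ?_
    push_cast
    ring
  rw [intervalIntegral.integral_eq_sub_of_hasDerivAt key
    ((Continuous.intervalIntegrable (by fun_prop) _ _))]
  norm_num

open Set intervalIntegral in
lemma val2 : (∫ x in (7 / 2 : ℝ)..(4 : ℝ),
    (x ^ 7 * (7 - x) ^ 4 - 4 / 3 * x ^ 5 * (7 - x) ^ 6 + 1 / 2 * x ^ 3 * (7 - x) ^ 8))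
      = 740539192849 / 4423680 := by
  have key : ∀ x ∈ Set.uIcc (7 / 2 : ℝ) (4 : ℝ),
      HasDerivAt (fun x : ℝ => (5764801/8 : ℝ) * x ^ 4 + (-3294172/5 : ℝ) * x ^ 5 + (2235331/9 : ℝ) * x ^ 6 + (-48020 : ℝ) * x ^ 7 + (4802 : ℝ) * x ^ 8 + (-5488/27 : ℝ) * x ^ 9 + (1/72 : ℝ) * x ^ 12)
        (x ^ 7 * (7 - x) ^ 4 - 4 / 3 * x ^ 5 * (7 - x) ^ 6 + 1 / 2 * x ^ 3 * (7 - x) ^ 8) x := by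
    intro x _
    have h := ((((((((hasDerivAt_pow 4 x).const_mul (5764801/8 : ℝ)).add ((hasDerivAt_pow 5 x).const_mul (-3294172/5 : ℝ))).add ((hasDerivAt_pow 6 x).const_mul (2235331/9 : ℝ))).add ((hasDerivAt_pow 7 x).const_mul (-48020 : ℝ))).add ((hasDerivAt_pow 8 x).const_mul (4802 : ℝ))).add ((hasDerivAt_pow 9 x).const_mul (-5488/27 : ℝ))).add ((hasDerivAt_pow 12 x).const_mul (1/72 : ℝ)))
    refine h.congr_deriv ?_
    push_cast
    ring
  rw [intervalIntegral.integral_eq_sub_of_hasDerivAt key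
    ((Continuous.intervalIntegrable (by fun_prop) _ _))]
  norm_num

open Set intervalIntegral in
lemma val3 : (∫ x in (4 : ℝ)..(5 : ℝ),
    (x ^ 7 * (11 - 2 * x) ^ 4 - 4 / 3 * x ^ 5 * (11 - 2 * x) ^ 6 + 1 / 2 * x ^ 3 * (11 - 2 * x) ^ 8))
      = 1519473337 / 3780 := by
  have key : ∀ x ∈ Set.uIcc (4 : ℝ) (5 : ℝ),
      HasDerivAt (fun x : ℝ => (214358881/8 : ℝ) * x ^ 4 + (-155897368/5 : ℝ) * x ^ 5 + (145268002/9 : ℝ) * x ^ 6 + (-33498608/7 : ℝ) * x ^ 7 + (7042321/8 : ℝ) * x ^ 8 + (-2757832/27 : ℝ) * x ^ 9 + (7260 : ℝ) * x ^ 10 + (-288 : ℝ) * x ^ 11 + (44/9 : ℝ) * x ^ 12)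
        (x ^ 7 * (11 - 2 * x) ^ 4 - 4 / 3 * x ^ 5 * (11 - 2 * x) ^ 6 + 1 / 2 * x ^ 3 * (11 - 2 * x) ^ 8) x := by
    intro x _
    have h := ((((((((((hasDerivAt_pow 4 x).const_mul (214358881/8 : ℝ)).add ((hasDerivAt_pow 5 x).const_mul (-155897368/5 : ℝ))).add ((hasDerivAt_pow 6 x).const_mul (145268002/9 : ℝ))).add ((hasDerivAt_pow 7 x).const_mul (-33498608/7 : ℝ))).add ((hasDerivAt_pow 8 x).const_mul (7042321/8 : ℝ))).add ((hasDerivAt_pow 9 x).const_mul (-2757832/27 : ℝ))).add ((hasDerivAt_pow 10 x).const_mul (7260 : ℝ))).add ((hasDerivAt_pow 11 x).const_mul (-288 : ℝ))).add ((hasDerivAt_pow 12 x).const_mul (44/9 : ℝ)))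
    refine h.congr_deriv ?_
    push_cast
    ring
  rw [intervalIntegral.integral_eq_sub_of_hasDerivAt key
    ((Continuous.intervalIntegrable (by fun_prop) _ _))]
  norm_num

open Set in
noncomputable def g5 (x : ℝ) : ℝ := min x (min (7 - x) (11 - 2 * x))

open Set in
noncomputable def F5 (x : ℝ) : ℝ :=
  ∫ y in Icc (0 : ℝ) (g5 x), 4 * x ^ 3 * y ^ 3 * (x + y) ^ 2 * (x - y) ^ 2

open Set in
lemma main_integral :
    (∫ p in S5, 4 * p.1 ^ 3 * p.2 ^ 3 * (p.1 + p.2) ^ 2 * (p.1 - p.2) ^ 2)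
      = 1553111579 / 2520 := by
  have hSc : IsCompact S5 := by
    rw [← hull_eq]
    exact (Set.toFinite _).isCompact_convexHull ℝ
  have hSm : MeasurableSet S5 := hSc.isClosed.measurableSet
  have hPc : Continuous (fun p : ℝ × ℝ =>
      4 * p.1 ^ 3 * p.2 ^ 3 * (p.1 + p.2) ^ 2 * (p.1 - p.2) ^ 2) := by fun_prop
  have hPint : IntegrableOn
      (fun p : ℝ × ℝ => 4 * p.1 ^ 3 * p.2 ^ 3 * (p.1 + p.2) ^ 2 * (p.1 - p.2) ^ 2) S5 volume :=
    hPc.continuousOn.integrableOn_compact hSc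
  have hind : Integrable (S5.indicator
      (fun p : ℝ × ℝ => 4 * p.1 ^ 3 * p.2 ^ 3 * (p.1 + p.2) ^ 2 * (p.1 - p.2) ^ 2))
      ((volume : Measure ℝ).prod (volume : Measure ℝ)) := by
    rw [← Measure.volume_eq_prod]
    exact hPint.integrable_indicator hSm
  rw [← MeasureTheory.integral_indicator hSm, Measure.volume_eq_prod,
    MeasureTheory.integral_prod _ hind]
  have key : ∀ x : ℝ,
      (∫ y : ℝ, S5.indicator
        (fun p : ℝ × ℝ => 4 * p.1 ^ 3 * p.2 ^ 3 * (p.1 + p.2) ^ 2 * (p.1 - p.2) ^ 2) (x, y))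
      = (Icc (0 : ℝ) 5).indicator F5 x := by
    intro x
    by_cases hx : x ∈ Icc (0 : ℝ) 5
    · rw [Set.indicator_of_mem hx]
      obtain ⟨hx0, hx5⟩ := hx
      have hpt : ∀ y : ℝ, S5.indicator
          (fun p : ℝ × ℝ => 4 * p.1 ^ 3 * p.2 ^ 3 * (p.1 + p.2) ^ 2 * (p.1 - p.2) ^ 2) (x, y)
          = (Icc (0 : ℝ) (g5 x)).indicator
            (fun y => 4 * x ^ 3 * y ^ 3 * (x + y) ^ 2 * (x - y) ^ 2) y := by
        intro y
        have hmem : (x, y) ∈ S5 ↔ y ∈ Icc (0 : ℝ) (g5 x) := by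
          simp only [S5, Set.mem_setOf_eq, Set.mem_Icc, g5, le_min_iff]
          constructor
          · rintro ⟨a1, a2, a3, a4, a5⟩
            exact ⟨a1, a3, by linarith, by linarith⟩
          · rintro ⟨a1, a2, a3, a4⟩
            exact ⟨a1, hx5, a2, by linarith, by linarith⟩
        by_cases hy : (x, y) ∈ S5
        · rw [Set.indicator_of_mem hy, Set.indicator_of_mem (hmem.mp hy)]
        · rw [Set.indicator_of_notMem hy,
            Set.indicator_of_notMem (fun hyy => hy (hmem.mpr hyy))]
      simp_rw [hpt]
      rw [MeasureTheory.integral_indicator measurableSet_Icc]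
      rfl
    · rw [Set.indicator_of_notMem hx]
      have hpt : ∀ y : ℝ, S5.indicator
          (fun p : ℝ × ℝ => 4 * p.1 ^ 3 * p.2 ^ 3 * (p.1 + p.2) ^ 2 * (p.1 - p.2) ^ 2) (x, y)
          = 0 := by
        intro y
        apply Set.indicator_of_notMem
        intro hy
        obtain ⟨a1, a2, a3, a4, a5⟩ := hy
        simp only [Set.mem_Icc, not_and_or, not_le] at hx
        rcases hx with hx | hx
        · exact absurd (le_trans a1 a3) (not_le.mpr hx)
        · exact absurd a2 (not_le.mpr hx)
      simp_rw [hpt]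
      simp
  simp_rw [key]
  rw [MeasureTheory.integral_indicator measurableSet_Icc,
    MeasureTheory.integral_Icc_eq_integral_Ioc]
  -- split [0,5] into three pieces
  have hsplit : Ioc (0 : ℝ) 5 = Ioc (0 : ℝ) (7 / 2) ∪ (Ioc (7 / 2 : ℝ) 4 ∪ Ioc (4 : ℝ) 5) := by
    rw [Set.Ioc_union_Ioc_eq_Ioc (by norm_num) (by norm_num),
      Set.Ioc_union_Ioc_eq_Ioc (by norm_num) (by norm_num)]
  have heq1 : EqOn F5 (fun x => x ^ 7 * x ^ 4 - 4 / 3 * x ^ 5 * x ^ 6 + 1 / 2 * x ^ 3 * x ^ 8)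
      (Ioc (0 : ℝ) (7 / 2)) := by
    intro x hx
    obtain ⟨hx0, hx1⟩ := hx
    have hg : g5 x = x := by
      unfold g5
      rw [min_eq_left (le_min_iff.mpr ⟨by linarith, by linarith⟩)]
    show F5 x = _
    unfold F5
    rw [hg, inner_int x x hx0.le]
  have heq2 : EqOn F5 (fun x => x ^ 7 * (7 - x) ^ 4 - 4 / 3 * x ^ 5 * (7 - x) ^ 6
      + 1 / 2 * x ^ 3 * (7 - x) ^ 8) (Ioc (7 / 2 : ℝ) 4) := by
    intro x hx
    obtain ⟨hx0, hx1⟩ := hx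
    have hg : g5 x = 7 - x := by
      unfold g5
      rw [min_eq_left (by linarith : (7 : ℝ) - x ≤ 11 - 2 * x),
        min_eq_right (by linarith : (7 : ℝ) - x ≤ x)]
    show F5 x = _
    unfold F5
    rw [hg, inner_int x (7 - x) (by linarith)]
  have heq3 : EqOn F5 (fun x => x ^ 7 * (11 - 2 * x) ^ 4 - 4 / 3 * x ^ 5 * (11 - 2 * x) ^ 6
      + 1 / 2 * x ^ 3 * (11 - 2 * x) ^ 8) (Ioc (4 : ℝ) 5) := by
    intro x hx
    obtain ⟨hx0, hx1⟩ := hx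
    have hg : g5 x = 11 - 2 * x := by
      unfold g5
      rw [min_eq_right (by linarith : (11 : ℝ) - 2 * x ≤ 7 - x),
        min_eq_right (by linarith : (11 : ℝ) - 2 * x ≤ x)]
    show F5 x = _
    unfold F5
    rw [hg, inner_int x (11 - 2 * x) (by linarith)]
  have hint1 : IntegrableOn F5 (Ioc (0 : ℝ) (7 / 2)) volume := by
    apply (Continuous.integrableOn_Ioc (f := fun x : ℝ =>
      x ^ 7 * x ^ 4 - 4 / 3 * x ^ 5 * x ^ 6 + 1 / 2 * x ^ 3 * x ^ 8) (by fun_prop)).congr_fun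
      (fun x hx => (heq1 hx).symm) measurableSet_Ioc
  have hint2 : IntegrableOn F5 (Ioc (7 / 2 : ℝ) 4) volume := by
    apply (Continuous.integrableOn_Ioc (f := fun x : ℝ =>
      x ^ 7 * (7 - x) ^ 4 - 4 / 3 * x ^ 5 * (7 - x) ^ 6 + 1 / 2 * x ^ 3 * (7 - x) ^ 8)
      (by fun_prop)).congr_fun (fun x hx => (heq2 hx).symm) measurableSet_Ioc
  have hint3 : IntegrableOn F5 (Ioc (4 : ℝ) 5) volume := by
    apply (Continuous.integrableOn_Ioc (f := fun x : ℝ =>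
      x ^ 7 * (11 - 2 * x) ^ 4 - 4 / 3 * x ^ 5 * (11 - 2 * x) ^ 6
        + 1 / 2 * x ^ 3 * (11 - 2 * x) ^ 8)
      (by fun_prop)).congr_fun (fun x hx => (heq3 hx).symm) measurableSet_Ioc
  have hdisj1 : Disjoint (Ioc (0 : ℝ) (7 / 2)) (Ioc (7 / 2 : ℝ) 4 ∪ Ioc (4 : ℝ) 5) := by
    rw [Set.disjoint_left]
    rintro x ⟨hx0, hx1⟩ (⟨hx2, _⟩ | ⟨hx2, _⟩) <;> linarith
  have hdisj2 : Disjoint (Ioc (7 / 2 : ℝ) 4) (Ioc (4 : ℝ) 5) := by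
    rw [Set.disjoint_left]
    rintro x ⟨hx0, hx1⟩ ⟨hx2, _⟩
    linarith
  rw [hsplit, MeasureTheory.setIntegral_union hdisj1
      (measurableSet_Ioc.union measurableSet_Ioc) hint1 (hint2.union hint3),
    MeasureTheory.setIntegral_union hdisj2 measurableSet_Ioc hint2 hint3,
    MeasureTheory.setIntegral_congr_fun measurableSet_Ioc heq1,
    MeasureTheory.setIntegral_congr_fun measurableSet_Ioc heq2,
    MeasureTheory.setIntegral_congr_fun measurableSet_Ioc heq3,
    ← intervalIntegral.integral_of_le (by norm_num : (0 : ℝ) ≤ 7 / 2),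
    ← intervalIntegral.integral_of_le (by norm_num : (7 / 2 : ℝ) ≤ 4),
    ← intervalIntegral.integral_of_le (by norm_num : (4 : ℝ) ≤ 5),
    val1, val2, val3]
  norm_num

/-- The Duistermaat–Heckman volume of the moment polytope `Δ₅^{Bℓ}` of the blow-up
`Bℓ_Z(X₅)`: `∫_{Δ₅^{Bℓ}} 4x³y³(x+y)²(x−y)² dxdy = 1553111579/2520`. -/
theorem volume_Delta5_blowup :
    let Δ : Set (ℝ × ℝ) := convexHull ℝ
      {((0 : ℝ), (0 : ℝ)), (5, 0), (5, 1), (4, 3), (7 / 2, 7 / 2)}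
    let P : ℝ × ℝ → ℝ := fun p =>
      4 * p.1 ^ 3 * p.2 ^ 3 * (p.1 + p.2) ^ 2 * (p.1 - p.2) ^ 2
    (∫ p in Δ, P p) = 1553111579 / 2520 := by
  intro Δ P
  show (∫ p in Δ, 4 * p.1 ^ 3 * p.2 ^ 3 * (p.1 + p.2) ^ 2 * (p.1 - p.2) ^ 2)
      = 1553111579 / 2520
  rw [show Δ = S5 from hull_eq]
  exact main_integral
end
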